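/- Let n be an even integer with n ≥ 2 and set k = n/2. Let y be an even integer with 2 ≤ y ≤ n/2. Then the probability that a lazy step selects between y/4 and y/2 (inclusive) of the y mismatched coordinates is at least 1/4; that is, ∑_{i : y/4 ≤ i ≤ y/2} binom(y,i)·binom(n−y, n/2 − i) / (2·binom(n, n/2)) ≥ 1/4. -/

import Mathlib

open Finset

/-- `pcoup n k y i` is the probability that a lazy step of the coupling is active and selects
exactly `i` of the `y` mismatched coordinates among the `k` coordinates picked:
`binom(y,i)·binom(n−y,k−i) / (2·binom(n,k))`. -/
noncomputable def pcoup (n k y : ℕ) (i : ℕ) : ℝ :=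
  ((y.choose i * (n - y).choose (k - i) : ℕ) : ℝ) / (2 * n.choose k)

lemma ratio2 (N i : ℕ) (h : 3*i+2 ≤ N) : 2 * N.choose i ≤ N.choose (i+1) := by
  have key := Nat.choose_succ_right_eq N i
  have h2 : 2 * N.choose i * (i+1) ≤ N.choose (i+1) * (i+1) := by
    rw [key]
    calc 2 * N.choose i * (i+1) = N.choose i * (2*(i+1)) := by ring
      _ ≤ N.choose i * (N-i) := Nat.mul_le_mul_left _ (by omega)
  exact Nat.le_of_mul_le_mul_right h2 (Nat.succ_pos i)

lemma geo (N d : ℕ) (h : 3*d ≤ N+1) : ∑ i ∈ range (d+1), N.choose i ≤ 2 * N.choose d := by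
  induction d with
  | zero => simp
  | succ e ih =>
    rw [Finset.sum_range_succ]
    have h2 : 2 * N.choose e ≤ N.choose (e+1) := ratio2 N e (by omega)
    have h3 := ih (by omega)
    omega

lemma PL (m : ℕ) (hm : 1 ≤ m) :
    2 * ∑ i ∈ Finset.range ((m+1)/2), (2*m).choose i ≤ (2*m).choose m := by
  rcases le_or_gt m 3 with hm3 | hm3
  · interval_cases m <;> decide
  · set c := (m+1)/2 with hcdef
    have hc2 : 2 ≤ c := by omega
    obtain ⟨e, he⟩ : ∃ e, c = e + 1 := ⟨c - 1, by omega⟩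
    have hgeo : ∑ i ∈ range c, (2*m).choose i ≤ 2 * (2*m).choose e := by
      rw [he]; exact geo (2*m) e (by omega)
    -- two-step: 4 * choose (2m) e ≤ choose (2m) (c+1)
    obtain ⟨d, hd⟩ : ∃ d, c + d = 2*m := ⟨2*m - c, by omega⟩
    have hdc : 2*c + 1 ≤ d := by omega
    have e1 := Nat.choose_succ_right_eq (2*m) c
    have e2 := Nat.choose_succ_right_eq (2*m) e
    rw [show e + 1 = c by omega] at e2
    rw [show 2*m - c = d by omega] at e1
    rw [show 2*m - e = d + 1 by omega] at e2
    have hprod : (2*m).choose (c+1) * ((c+1) * c) = (2*m).choose e * ((d+1) * d) := by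
      calc (2*m).choose (c+1) * ((c+1) * c) = ((2*m).choose (c+1) * (c+1)) * c := by ring
        _ = ((2*m).choose c * d) * c := by rw [e1]
        _ = ((2*m).choose c * c) * d := by ring
        _ = ((2*m).choose e * (d+1)) * d := by rw [e2]
        _ = (2*m).choose e * ((d+1) * d) := by ring
    have hineq : 4 * ((c+1) * c) ≤ (d+1) * d := by
      calc 4 * ((c+1)*c) = (2*c+2) * (2*c) := by ring
        _ ≤ (d+1) * d := Nat.mul_le_mul (by omega) (by omega)
    have h4 : 4 * (2*m).choose e ≤ (2*m).choose (c+1) := by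
      have : 4 * (2*m).choose e * ((c+1)*c) ≤ (2*m).choose (c+1) * ((c+1)*c) := by
        rw [hprod]
        calc 4 * (2*m).choose e * ((c+1)*c) = (2*m).choose e * (4*((c+1)*c)) := by ring
          _ ≤ (2*m).choose e * ((d+1)*d) := Nat.mul_le_mul_left _ hineq
      exact Nat.le_of_mul_le_mul_right this (by positivity)
    have hmid : (2*m).choose (c+1) ≤ (2*m).choose m := by
      have := Nat.choose_le_middle (c+1) (2*m)
      rwa [show 2*m/2 = m by omega] at this
    omega

lemma ceil_val (m : ℕ) : ⌈((2*m : ℕ) : ℚ) / 4⌉₊ = (m+1)/2 := by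
  rcases Nat.even_or_odd m with ⟨t, ht⟩ | ⟨t, ht⟩
  · subst ht
    rw [show ((2*(t+t) : ℕ) : ℚ)/4 = (t : ℚ) by push_cast; ring]
    rw [Nat.ceil_natCast]; omega
  · subst ht
    rw [show ((2*(2*t+1) : ℕ) : ℚ)/4 = 1/2 + (t : ℚ) by push_cast; ring]
    rw [Nat.ceil_add_natCast (by norm_num)]
    rw [show ⌈(1/2 : ℚ)⌉₊ = 1 by rw [Nat.ceil_eq_iff] <;> norm_num]
    omega


/-- Lemma `prob ineq`, part 2: for `k = n/2` and even `y` with `2 ≤ y ≤ n/2`, the probability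
of selecting between `y/4` and `y/2` mismatched coordinates is at least `1/4`. -/
theorem stmt_4 (n y : ℕ) (hn : 2 ≤ n) (hne : Even n) (hye : Even y)
    (hy1 : 2 ≤ y) (hy2 : y ≤ n / 2) :
    (1 : ℝ) / 4 ≤ ∑ i ∈ Finset.Icc ⌈(y : ℚ) / 4⌉₊ (y / 2), pcoup n (n / 2) y i := by
  obtain ⟨k, hk⟩ : ∃ k, n = 2*k := by obtain ⟨k, hk⟩ := hne; exact ⟨k, by omega⟩
  obtain ⟨m, hm⟩ : ∃ m, y = 2*m := by obtain ⟨m, h⟩ := hye; exact ⟨m, by omega⟩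
  have hnk : n / 2 = k := by omega
  have hym : y / 2 = m := by omega
  have hm1 : 1 ≤ m := by omega
  have hyk : y ≤ k := by omega
  set c := (m+1)/2 with hcdef
  have hcy : ⌈(y : ℚ) / 4⌉₊ = c := by rw [hm]; exact ceil_val m
  have hcm : c ≤ m := by omega
  set F : ℕ → ℕ := fun i => y.choose i * (n-y).choose (k-i) with hF
  -- Vandermonde
  have hvan : ∑ i ∈ range (k+1), F i = n.choose k := by
    have h1 : n.choose k = (y + (n-y)).choose k := by congr 1; omega
    rw [h1, Nat.add_choose_eq, Finset.Nat.sum_antidiagonal_eq_sum_range_succ_mk]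
  -- restrict to range (y+1)
  have hres : ∑ i ∈ range (y+1), F i = ∑ i ∈ range (k+1), F i := by
    apply Finset.sum_subset
    · exact Finset.range_subset_range.mpr (by omega)
    · intro i hi hni
      simp only [Finset.mem_range] at hi hni
      have : y < i := by omega
      simp [hF, Nat.choose_eq_zero_of_lt this]
  -- symmetry
  have hsymm : ∀ i ≤ y, F (y - i) = F i := by
    intro i hi
    have h1 : y.choose (y - i) = y.choose i := Nat.choose_symm hi
    have h2 : k - (y - i) = (n-y) - (k-i) := by omega
    have h3 : (n-y).choose ((n-y) - (k-i)) = (n-y).choose (k-i) :=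
      Nat.choose_symm (by omega)
    simp only [hF, h1, h2, h3]
  -- upper part equals lower part
  have hupper : ∑ i ∈ Finset.Ico (m+1) (y+1), F i = ∑ i ∈ range m, F i := by
    rw [Finset.sum_Ico_eq_sum_range]
    have hlen : y + 1 - (m+1) = m := by omega
    rw [hlen]
    rw [← Finset.sum_range_reflect (fun j => F j) m]
    apply Finset.sum_congr rfl
    intro j hj
    simp only [Finset.mem_range] at hj
    have : m - 1 - j = y - (m + 1 + j) := by omega
    rw [this, hsymm (m+1+j) (by omega)]
  -- decomposition of N
  have hsplit : ∑ i ∈ range (y+1), F i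
      = ∑ i ∈ range (m+1), F i + ∑ i ∈ Finset.Ico (m+1) (y+1), F i := by
    rw [Finset.range_eq_Ico, Finset.range_eq_Ico]
    exact (Finset.sum_Ico_consecutive F (m := 0) (n := m+1) (k := y+1) (by omega) (by omega)).symm
  have hsplit2 : ∑ i ∈ range (m+1), F i
      = ∑ i ∈ range c, F i + ∑ i ∈ Finset.Ico c (m+1), F i := by
    rw [Finset.range_eq_Ico, Finset.range_eq_Ico]
    exact (Finset.sum_Ico_consecutive F (m := 0) (n := c) (k := m+1) (by omega) (by omega)).symm
  have hsplit3 : ∑ i ∈ range (m+1), F i = ∑ i ∈ range m, F i + F m :=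
    Finset.sum_range_succ F m
  -- key inequality : 2 * lower tail ≤ F m
  have hkey : 2 * ∑ i ∈ range c, F i ≤ F m := by
    have hmid : ∀ i, (n-y).choose (k-i) ≤ (n-y).choose (k-m) := by
      intro i
      have := Nat.choose_le_middle (k-i) (n-y)
      rwa [show (n-y)/2 = k - m by omega] at this
    have h1 : ∑ i ∈ range c, F i ≤ (∑ i ∈ range c, y.choose i) * (n-y).choose (k-m) := by
      rw [Finset.sum_mul]
      exact Finset.sum_le_sum fun i _ => Nat.mul_le_mul_left _ (hmid i)
    have h2 : 2 * ∑ i ∈ range c, y.choose i ≤ y.choose m := by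
      rw [hm]; exact PL m hm1
    calc 2 * ∑ i ∈ range c, F i ≤ 2 * ((∑ i ∈ range c, y.choose i) * (n-y).choose (k-m)) :=
          by omega
      _ = (2 * ∑ i ∈ range c, y.choose i) * (n-y).choose (k-m) := by ring
      _ ≤ y.choose m * (n-y).choose (k-m) := Nat.mul_le_mul_right _ h2
      _ = F m := rfl
  -- main nat inequality
  have hW : Finset.Icc c m = Finset.Ico c (m+1) := by rw [Finset.Ico_add_one_right_eq_Icc]
  have hmain : n.choose k ≤ 2 * ∑ i ∈ Finset.Ico c (m+1), F i := by omega
  -- cast to ℝ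
  rw [hcy, hym, hW, hnk]
  have hsum : ∑ i ∈ Finset.Ico c (m+1), pcoup n k y i
      = ((∑ i ∈ Finset.Ico c (m+1), F i : ℕ) : ℝ) / (2 * n.choose k) := by
    rw [Nat.cast_sum, Finset.sum_div]
    rfl
  rw [hsum]
  have hNpos : 0 < n.choose k := Nat.choose_pos (by omega)
  rw [le_div_iff₀ (by positivity)]
  have : ((n.choose k : ℕ) : ℝ) ≤ 2 * ((∑ i ∈ Finset.Ico c (m+1), F i : ℕ) : ℝ) := by
    exact_mod_cast hmain
  linarith
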